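/- arXiv:2508.12634 — 3 statements merged into one kernel-verified Lean document; each statement's English description precedes it below -/
import Mathlib

section
/- Let X and Θ be nonempty compact metric spaces, ϑ⁰ ∈ Θ, and K : X × Θ → ℝ continuous. Let ψ : Θ → ℝ be a nonnegative Borel measurable function such that |K(x,ϑ) − K(y,ϑ)| ≤ ψ(ϑ)·d(x,y) for all x, y ∈ X and ϑ ∈ Θ. Let (P_t)_{t∈ℕ} be Borel probability measures on Θ converging weakly to the Dirac measure δ_{ϑ⁰}, and suppose there is L < ∞ with ∫_Θ ψ dP_t ≤ L for all t. Define f_t(x) = ∫_Θ K(x,ϑ) dP_t(ϑ) and f(x) = K(x,ϑ⁰), and let M_t and M be the (nonempty) sets of minimizers of f_t and f over X, respectively. Then (i) min_{x∈X} f_t(x) → min_{x∈X} f(x) as t → ∞, and (ii) sup_{x∈M_t} dist(x, M) → 0 as t → ∞, where dist(x, M) = inf_{y∈M} d(x,y). -/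
open MeasureTheory Filter

/-- Consistency of optimal values and optimal solution sets of the
Bayesian averaged objective, given weak posterior consistency `P t ⇒ δ_{ϑ0}` and
a uniformly integrable Lipschitz modulus `ψ`. -/
theorem stmt1 {X Θ : Type*} [MetricSpace X] [CompactSpace X] [Nonempty X]
    [MetricSpace Θ] [CompactSpace Θ] [Nonempty Θ]
    [MeasurableSpace Θ] [BorelSpace Θ]
    (ϑ0 : Θ) (K : X × Θ → ℝ) (hK : Continuous K)
    (ψ : Θ → ℝ) (hψmeas : Measurable ψ) (hψ0 : ∀ ϑ, 0 ≤ ψ ϑ)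
    (hLip : ∀ x y : X, ∀ ϑ : Θ, |K (x, ϑ) - K (y, ϑ)| ≤ ψ ϑ * dist x y)
    (P : ℕ → Measure Θ) (hP : ∀ t, IsProbabilityMeasure (P t))
    (hweak : ∀ g : BoundedContinuousFunction Θ ℝ,
      Tendsto (fun t => ∫ ϑ, g ϑ ∂(P t)) atTop
        (nhds (∫ ϑ, g ϑ ∂(Measure.dirac ϑ0))))
    (L : ℝ) (hL : ∀ t, ∫ ϑ, ψ ϑ ∂(P t) ≤ L)
    (ft : ℕ → X → ℝ) (hft : ∀ t x, ft t x = ∫ ϑ, K (x, ϑ) ∂(P t))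
    (f : X → ℝ) (hf : ∀ x, f x = K (x, ϑ0))
    (Mt : ℕ → Set X) (hMt : ∀ t, Mt t = {x | ∀ y, ft t x ≤ ft t y})
    (M : Set X) (hM : M = {x | ∀ y, f x ≤ f y})
    (hMtne : ∀ t, (Mt t).Nonempty) (hMne : M.Nonempty) :
    Tendsto (fun t => ⨅ x, ft t x) atTop (nhds (⨅ x, f x)) ∧
    Tendsto (fun t => sSup ((fun x => Metric.infDist x M) '' (Mt t)))
      atTop (nhds 0) := by
  -- global bound on K
  obtain ⟨p0, -, hp0'⟩ := isCompact_univ.exists_isMaxOn Set.univ_nonempty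
    hK.norm.continuousOn
  have hp0 : ∀ q : X × Θ, ‖K q‖ ≤ ‖K p0‖ := fun q => hp0' (Set.mem_univ q)
  set C : ℝ := ‖K p0‖ with hCdef
  -- integrability of the integrands
  have hint : ∀ (t : ℕ) (x : X), Integrable (fun ϑ => K (x, ϑ)) (P t) := by
    intro t x
    haveI := hP t
    exact (integrable_const C).mono'
      ((hK.comp (Continuous.prodMk_right x)).aestronglyMeasurable)
      (Filter.Eventually.of_forall fun ϑ => hp0 (x, ϑ))
  -- pointwise convergence
  have hpt : ∀ x : X, Tendsto (fun t => ft t x) atTop (nhds (f x)) := by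
    intro x
    have hgc : Continuous fun ϑ => K (x, ϑ) := hK.comp (Continuous.prodMk_right x)
    have h := hweak (BoundedContinuousFunction.mkOfCompact ⟨fun ϑ => K (x, ϑ), hgc⟩)
    simp only [BoundedContinuousFunction.mkOfCompact_apply, ContinuousMap.coe_mk] at h
    rw [integral_dirac] at h
    have h1 : (fun t => ∫ ϑ, K (x, ϑ) ∂ P t) = fun t => ft t x := by
      funext t; rw [hft]
    rw [h1] at h
    rwa [hf]
  -- continuity of f
  have hfc : Continuous f := by
    have h : (fun x : X => K (x, ϑ0)) = f := funext fun x => (hf x).symm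
    rw [← h]; exact hK.comp (continuous_id.prodMk continuous_const)
  -- "uniform convergence"
  have hunif : ∀ ε > (0 : ℝ), ∀ᶠ t in atTop, ∀ x, |ft t x - f x| < ε := by
    intro ε hε
    have hε3 : (0 : ℝ) < ε / 3 := by linarith
    obtain ⟨δ, hδ, hmod⟩ := Metric.uniformContinuous_iff.mp
      (CompactSpace.uniformContinuous_of_continuous hK) (ε / 3) hε3
    have key : ∀ x y : X, dist x y < δ → ∀ ϑ, |K (x, ϑ) - K (y, ϑ)| < ε / 3 := by
      intro x y hxy ϑ
      have hd : dist ((x, ϑ) : X × Θ) (y, ϑ) < δ := by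
        rw [Prod.dist_eq]; simp only [dist_self]; exact max_lt hxy hδ
      have := hmod hd
      rwa [Real.dist_eq] at this
    have hftmod : ∀ t, ∀ x y : X, dist x y < δ → |ft t x - ft t y| ≤ ε / 3 := by
      intro t x y hxy
      haveI := hP t
      rw [hft, hft, ← integral_sub (hint t x) (hint t y), ← Real.norm_eq_abs]
      calc ‖∫ ϑ, (K (x, ϑ) - K (y, ϑ)) ∂ P t‖
          ≤ (ε / 3) * ((P t) Set.univ).toReal :=
            norm_integral_le_of_norm_le_const
              (Filter.Eventually.of_forall fun ϑ => (key x y hxy ϑ).le)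
        _ = ε / 3 := by simp [measure_univ]
    have hfmod : ∀ x y : X, dist x y < δ → |f x - f y| ≤ ε / 3 := by
      intro x y hxy
      rw [hf, hf]
      exact (key x y hxy ϑ0).le
    obtain ⟨s, hs⟩ := isCompact_univ.elim_finite_subcover
      (fun x : X => Metric.ball x δ) (fun x => Metric.isOpen_ball)
      (fun x _ => Set.mem_iUnion.mpr ⟨x, Metric.mem_ball_self hδ⟩)
    have hev : ∀ᶠ t in atTop, ∀ i ∈ s, |ft t i - f i| < ε / 3 := by
      rw [eventually_all_finset]
      intro i _
      filter_upwards [(hpt i).eventually (Metric.ball_mem_nhds (f i) hε3)] with t ht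
      simpa [Metric.mem_ball, Real.dist_eq] using ht
    filter_upwards [hev] with t ht x
    obtain ⟨i, his, hxi⟩ : ∃ i ∈ s, x ∈ Metric.ball i δ := by
      have := hs (Set.mem_univ x)
      simpa using this
    have hxid : dist x i < δ := Metric.mem_ball.mp hxi
    have h1 := hftmod t x i hxid
    have h2 := ht i his
    have h3 := hfmod i x (by rwa [dist_comm])
    have t1 := abs_sub_le (ft t x) (ft t i) (f x)
    have t2 := abs_sub_le (ft t i) (f i) (f x)
    linarith
  -- bounds for ft and f
  have habsft : ∀ t x, |ft t x| ≤ C := by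
    intro t x
    haveI := hP t
    rw [hft, ← Real.norm_eq_abs]
    calc ‖∫ ϑ, K (x, ϑ) ∂ P t‖ ≤ C * ((P t) Set.univ).toReal :=
          norm_integral_le_of_norm_le_const
            (Filter.Eventually.of_forall fun ϑ => hp0 (x, ϑ))
      _ = C := by simp [measure_univ]
  have hbddft : ∀ t, BddBelow (Set.range (ft t)) := by
    intro t
    refine ⟨-C, ?_⟩
    rintro r ⟨x, rfl⟩
    have := abs_le.mp (habsft t x)
    linarith [this.1]
  have hbddf : BddBelow (Set.range f) := by
    refine ⟨-C, ?_⟩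
    rintro r ⟨x, rfl⟩
    have h := hp0 (x, ϑ0)
    rw [Real.norm_eq_abs] at h
    have := abs_le.mp h
    rw [hf]
    linarith [this.1]
  -- minimizers
  obtain ⟨x0, hx0⟩ := hMne
  rw [hM] at hx0
  have hinff : (⨅ x, f x) = f x0 := le_antisymm (ciInf_le hbddf x0) (le_ciInf hx0)
  have hxt : ∀ t, ∃ xt, (∀ y, ft t xt ≤ ft t y) ∧ (⨅ x, ft t x) = ft t xt := by
    intro t
    obtain ⟨xt, hxtm⟩ := hMtne t
    rw [hMt] at hxtm
    exact ⟨xt, hxtm, le_antisymm (ciInf_le (hbddft t) xt) (le_ciInf hxtm)⟩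
  constructor
  · -- convergence of optimal values
    rw [Metric.tendsto_atTop]
    intro ε hε
    obtain ⟨N, hN⟩ := eventually_atTop.mp (hunif (ε / 2) (by linarith))
    refine ⟨N, fun t htN => ?_⟩
    obtain ⟨xt, hxtmin, hxteq⟩ := hxt t
    have h1 := abs_lt.mp (hN t htN xt)
    have h2 := abs_lt.mp (hN t htN x0)
    rw [Real.dist_eq, hxteq, hinff, abs_lt]
    constructor
    · linarith [hx0 xt]
    · linarith [hxtmin x0]
  · -- convergence of optimal solutions
    rw [Metric.tendsto_atTop]
    intro ε hε
    have hε2 : (0 : ℝ) < ε / 2 := by linarith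
    set A : Set X := {x | ε / 2 ≤ Metric.infDist x M} with hA
    have hclosed : IsClosed A :=
      isClosed_le continuous_const (Metric.continuous_infDist_pt M)
    have hgood : ∃ d > (0 : ℝ), ∀ x : X, f x < f x0 + d → Metric.infDist x M < ε / 2 := by
      by_cases hAne : A.Nonempty
      · obtain ⟨a, haA, hamin⟩ := hclosed.isCompact.exists_isMinOn hAne hfc.continuousOn
        have haM : a ∉ M := by
          intro haM
          have h0 : Metric.infDist a M = 0 := Metric.infDist_zero_of_mem haM
          have : ε / 2 ≤ Metric.infDist a M := haA
          rw [h0] at this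
          linarith
        have hlt : f x0 < f a := by
          rcases lt_or_eq_of_le (hx0 a) with h | h
          · exact h
          · exfalso
            apply haM
            rw [hM]
            intro y
            rw [← h]
            exact hx0 y
        refine ⟨f a - f x0, by linarith, fun x hx => ?_⟩
        by_contra hcon
        push_neg at hcon
        have hxA : x ∈ A := hcon
        have h5 : f a ≤ f x := hamin hxA
        linarith
      · exact ⟨1, one_pos, fun x _ =>
          lt_of_not_ge fun h => hAne ⟨x, h⟩⟩
    obtain ⟨d, hd, hprop⟩ := hgood
    obtain ⟨N, hN⟩ := eventually_atTop.mp (hunif (d / 3) (by linarith))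
    refine ⟨N, fun t htN => ?_⟩
    have hxall : ∀ x ∈ Mt t, Metric.infDist x M < ε / 2 := by
      intro x hx
      rw [hMt] at hx
      have h1 := abs_lt.mp (hN t htN x)
      have h2 := abs_lt.mp (hN t htN x0)
      have hle := hx x0
      have hfx : f x < f x0 + d := by linarith
      exact hprop x hfx
    have hne : ((fun x => Metric.infDist x M) '' Mt t).Nonempty := (hMtne t).image _
    have hbdd : BddAbove ((fun x => Metric.infDist x M) '' Mt t) := by
      refine ⟨ε / 2, ?_⟩
      rintro r ⟨x, hx, rfl⟩
      exact (hxall x hx).le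
    have hle : sSup ((fun x => Metric.infDist x M) '' Mt t) ≤ ε / 2 := by
      refine csSup_le hne ?_
      rintro r ⟨x, hx, rfl⟩
      exact (hxall x hx).le
    have h0 : 0 ≤ sSup ((fun x => Metric.infDist x M) '' Mt t) := by
      obtain ⟨x, hx⟩ := hMtne t
      exact le_trans Metric.infDist_nonneg (le_csSup hbdd ⟨x, hx, rfl⟩)
    rw [Real.dist_eq, sub_zero, abs_of_nonneg h0]
    linarith
end

section
/- Let X be a nonempty compact metric space and let f_t, f : X → ℝ be continuous functions with f_t → f uniformly on X. Let M_t = argmin_{x∈X} f_t(x) and M = argmin_{x∈X} f(x) (both nonempty by compactness). Then for every ε > 0 there exists T such that for all t ≥ T and all x ∈ M_t, inf_{y∈M} d(x,y) ≤ ε; equivalently, sup_{x∈M_t} dist(x, M) → 0 as t → ∞. -/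
open Filter

/-- Under uniform convergence of continuous functions on a nonempty
compact metric space, the minimizer sets of `ft t` converge to the minimizer set
of `f`: eventually every minimizer of `ft t` is within `ε` of `M`, equivalently
the deviation `sup_{x ∈ Mt t} dist(x, M)` tends to `0`. -/
theorem stmt3 {X : Type*} [MetricSpace X] [CompactSpace X] [Nonempty X]
    (ft : ℕ → X → ℝ) (f : X → ℝ)
    (hftc : ∀ t, Continuous (ft t)) (hfc : Continuous f)
    (hunif : TendstoUniformly ft f atTop)
    (Mt : ℕ → Set X) (hMt : ∀ t, Mt t = {x | ∀ y, ft t x ≤ ft t y})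
    (M : Set X) (hM : M = {x | ∀ y, f x ≤ f y}) :
    (∀ ε > (0 : ℝ), ∃ T : ℕ, ∀ t ≥ T, ∀ x ∈ Mt t, Metric.infDist x M ≤ ε) ∧
    Tendsto (fun t => sSup ((fun x => Metric.infDist x M) '' (Mt t)))
      atTop (nhds 0) := by
  -- f attains its minimum at some x0 ∈ M
  obtain ⟨x0, -, hx0'⟩ := isCompact_univ.exists_isMinOn Set.univ_nonempty hfc.continuousOn
  rw [isMinOn_iff] at hx0'
  have hx0 : ∀ y, f x0 ≤ f y := fun y => hx0' y (Set.mem_univ y)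
  have hx0M : x0 ∈ M := by rw [hM]; exact fun y => hx0 y
  -- each ft t attains its minimum
  have hMtne : ∀ t, (Mt t).Nonempty := by
    intro t
    obtain ⟨z, -, hz⟩ := isCompact_univ.exists_isMinOn Set.univ_nonempty (hftc t).continuousOn
    rw [isMinOn_iff] at hz
    exact ⟨z, by rw [hMt t]; exact fun y => hz y (Set.mem_univ y)⟩
  have key : ∀ ε > (0 : ℝ), ∃ T : ℕ, ∀ t ≥ T, ∀ x ∈ Mt t, Metric.infDist x M ≤ ε := by
    intro ε hε
    set S : Set X := {x | ε ≤ Metric.infDist x M} with hSdef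
    have hSclosed : IsClosed S :=
      isClosed_le continuous_const (Metric.continuous_infDist_pt M)
    by_cases hS : S.Nonempty
    · obtain ⟨z, hzS, hzmin'⟩ := hSclosed.isCompact.exists_isMinOn hS hfc.continuousOn
      rw [isMinOn_iff] at hzmin'
      have hzmin : ∀ w ∈ S, f z ≤ f w := hzmin'
      have hzM : z ∉ M := by
        intro hmem
        have : Metric.infDist z M = 0 := Metric.infDist_zero_of_mem hmem
        have := hzS
        simp only [hSdef, Set.mem_setOf_eq] at this
        linarith
      have hzgt : f x0 < f z := by
        rw [hM] at hzM
        simp only [Set.mem_setOf_eq, not_forall, not_le] at hzM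
        obtain ⟨y, hy⟩ := hzM
        exact lt_of_le_of_lt (hx0 y) hy
      set δ : ℝ := f z - f x0 with hδdef
      have hδ : 0 < δ := by linarith
      rw [Metric.tendstoUniformly_iff] at hunif
      obtain ⟨T, hT⟩ := (hunif (δ / 2) (by linarith)).exists_forall_of_atTop
      refine ⟨T, fun t ht x hx => ?_⟩
      have hxle : ft t x ≤ ft t x0 := by
        rw [hMt t] at hx; exact hx x0
      have h1 : dist (f x) (ft t x) < δ / 2 := hT t ht x
      have h2 : dist (f x0) (ft t x0) < δ / 2 := hT t ht x0
      rw [Real.dist_eq, abs_lt] at h1 h2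
      have hfx : f x < f z := by linarith
      have hxS : x ∉ S := fun hxS => absurd (hzmin x hxS) (by linarith)
      simp only [hSdef, Set.mem_setOf_eq, not_le] at hxS
      linarith
    · refine ⟨0, fun t _ x _ => ?_⟩
      by_contra h
      exact hS ⟨x, le_of_lt (not_le.mp h)⟩
  refine ⟨key, ?_⟩
  rw [Metric.tendsto_atTop]
  intro ε' hε'
  obtain ⟨T, hT⟩ := key (ε' / 2) (by linarith)
  refine ⟨T, fun t ht => ?_⟩
  set A : Set ℝ := (fun x => Metric.infDist x M) '' (Mt t) with hAdef
  obtain ⟨w, hw⟩ := hMtne t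
  have hwA : Metric.infDist w M ∈ A := ⟨w, hw, rfl⟩
  have hub : ∀ a ∈ A, a ≤ ε' / 2 := by
    rintro a ⟨x, hx, rfl⟩
    exact hT t ht x hx
  have hbdd : BddAbove A := ⟨ε' / 2, hub⟩
  have hle : sSup A ≤ ε' / 2 := Real.sSup_le hub (by linarith)
  have hge : 0 ≤ sSup A := le_trans Metric.infDist_nonneg (le_csSup hbdd hwA)
  rw [Real.dist_eq, sub_zero, abs_of_nonneg hge]
  linarith
end

section
/- Let X be a nonempty compact metric space, F : X → ℝ continuous with minimizer set S* = argmin_{x∈X} F(x), and g : X → ℝ continuous. Let (g_t)_{t∈ℕ} be continuous functions converging uniformly on X to g, and let (ε_t)_{t∈ℕ} be positive reals with ε_t → 0. Then (min_{x∈X}(F(x) + ε_t·g_t(x)) − min_{x∈X} F(x)) / ε_t → min_{x∈S*} g(x) as t → ∞. -/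
open Filter

/-- On a nonempty compact space, a continuous real function attains its infimum. -/
lemma exists_iInf_eq_min {X : Type*} [MetricSpace X] [CompactSpace X] [Nonempty X]
    (h : X → ℝ) (hc : Continuous h) : ∃ z, (⨅ x, h x) = h z ∧ ∀ y, h z ≤ h y := by
  obtain ⟨z, -, hz⟩ := isCompact_univ.exists_isMinOn Set.univ_nonempty hc.continuousOn
  have hz' : ∀ y, h z ≤ h y := fun y => isMinOn_iff.mp hz y (Set.mem_univ y)
  exact ⟨z, le_antisymm (ciInf_le ⟨h z, by rintro _ ⟨y, rfl⟩; exact hz' y⟩ z)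
    (le_ciInf hz'), hz'⟩

/-- Danskin-type directional-derivative formula for the minimum
value functional: with `F` continuous on a nonempty compact metric space, `S*` its
minimizer set, `gt → g` uniformly with all functions continuous, and `εt → 0⁺`,
`(min (F + εt·gt) − min F) / εt → min_{x ∈ S*} g(x)`. -/
theorem stmt10 {X : Type*} [MetricSpace X] [CompactSpace X] [Nonempty X]
    (F : X → ℝ) (hF : Continuous F)
    (Sstar : Set X) (hS : Sstar = {x | ∀ y, F x ≤ F y})
    (g : X → ℝ) (hg : Continuous g)
    (gt : ℕ → X → ℝ) (hgt : ∀ t, Continuous (gt t))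
    (hunif : TendstoUniformly gt g atTop)
    (εt : ℕ → ℝ) (hεt : ∀ t, 0 < εt t)
    (hεt0 : Tendsto εt atTop (nhds 0)) :
    Tendsto
      (fun t => ((⨅ x, (F x + εt t * gt t x)) - ⨅ x, F x) / εt t)
      atTop (nhds (⨅ x : Sstar, g ↑x)) := by
  obtain ⟨x0, hm, hx0⟩ := exists_iInf_eq_min F hF
  have hx0S : x0 ∈ Sstar := by rw [hS]; exact hx0
  have hSclosed : IsClosed Sstar := by
    rw [hS, Set.setOf_forall]
    exact isClosed_iInter fun y => isClosed_le hF continuous_const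
  haveI : CompactSpace Sstar := isCompact_iff_compactSpace.mp hSclosed.isCompact
  haveI : Nonempty Sstar := ⟨⟨x0, hx0S⟩⟩
  obtain ⟨zs, hLs, hzs⟩ :=
    exists_iInf_eq_min (fun x : Sstar => g ↑x) (hg.comp continuous_subtype_val)
  set xs : X := (zs : X) with hxs
  have hxsS : xs ∈ Sstar := zs.2
  have hxsmin : ∀ y ∈ Sstar, g xs ≤ g y := fun y hy => hzs ⟨y, hy⟩
  have hFxs : F xs = F x0 := le_antisymm (by rw [hS] at hxsS; exact hxsS x0) (hx0 xs)
  obtain ⟨zC, -, hzC⟩ := exists_iInf_eq_min (fun x => -|g x|) (by continuity)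
  set C := |g zC| with hCdef
  have hC : ∀ x, |g x| ≤ C := fun x => by have := hzC x; simp only [neg_le_neg_iff] at this; exact this
  have hC0 : 0 ≤ C := abs_nonneg _
  choose xt hVt hxt using fun t =>
    exists_iInf_eq_min (fun x => F x + εt t * gt t x)
      (hF.add (continuous_const.mul (hgt t)))
  simp only [hm, hLs, hVt]
  rw [Metric.tendsto_nhds]
  intro ε hε
  set δ := ε / 4 with hδdef
  have hδpos : 0 < δ := by positivity
  -- key compactness claim
  have hQ : ∃ η > 0, ∀ x, F x ≤ F x0 + η → g xs - δ ≤ g x := by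
    by_cases hT : {x | g x ≤ g xs - δ}.Nonempty
    · have hTc : IsClosed {x | g x ≤ g xs - δ} := isClosed_le hg continuous_const
      obtain ⟨z, hzT, hz⟩ := hTc.isCompact.exists_isMinOn hT hF.continuousOn
      have hzT' : g z ≤ g xs - δ := hzT
      have hz0 : F x0 < F z := by
        by_contra h
        push_neg at h
        have hzS : z ∈ Sstar := by rw [hS]; exact fun y => h.trans (hx0 y)
        have := hxsmin z hzS
        linarith
      refine ⟨(F z - F x0) / 2, by linarith, fun x hx => ?_⟩
      by_contra hgx
      push_neg at hgx
      have := isMinOn_iff.mp hz x (le_of_lt hgx)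
      linarith
    · exact ⟨1, one_pos, fun x _ => le_of_not_gt fun h => hT ⟨x, h.le⟩⟩
  obtain ⟨η, hηpos, hη⟩ := hQ
  have hu := Metric.tendstoUniformly_iff.mp hunif δ hδpos
  have hD : (0 : ℝ) < 2 * C + 2 * δ + 1 := by linarith
  have he := Metric.tendsto_nhds.mp hεt0 (η / (2 * C + 2 * δ + 1)) (by positivity)
  filter_upwards [hu, he] with t hut het
  set e := εt t with hedef
  have hepos : 0 < e := hεt t
  set a := xt t with hadef
  have hga : ∀ x, |g x - gt t x| < δ := fun x => by
    have := hut x; rwa [Real.dist_eq] at this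
  -- upper bound on the min value
  have hub : F a + e * gt t a ≤ F x0 + e * (g xs + δ) := by
    have h1 := hxt t xs
    have h2 : gt t xs ≤ g xs + δ := by have := hga xs; cases abs_lt.mp this; linarith
    have h3 : e * gt t xs ≤ e * (g xs + δ) := by
      exact mul_le_mul_of_nonneg_left h2 hepos.le
    calc F a + e * gt t a ≤ F xs + e * gt t xs := h1
      _ = F x0 + e * gt t xs := by rw [hFxs]
      _ ≤ F x0 + e * (g xs + δ) := by linarith
  -- εt t is small
  have hesmall : e * (2 * C + 2 * δ) ≤ η := by
    have h1 : e < η / (2 * C + 2 * δ + 1) := by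
      have := het; rw [Real.dist_eq, sub_zero, abs_of_pos hepos] at this; exact this
    have h2 : e * (2 * C + 2 * δ + 1) < η := by
      rw [← lt_div_iff₀ hD]; exact h1
    nlinarith
  -- F a is close to the min of F, so g a ≥ g xs - δ
  have hga' : g xs - δ ≤ g a := by
    apply hη
    have h1 : g a - δ ≤ gt t a := by have := hga a; cases abs_lt.mp this; linarith
    have h2 : -C ≤ g a := by have := hC a; cases abs_le.mp this; linarith
    have h3 : g xs ≤ C := by have := hC xs; cases abs_le.mp this; assumption
    have h4 : e * (-C - δ) ≤ e * gt t a := by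
      apply mul_le_mul_of_nonneg_left _ hepos.le; linarith
    nlinarith
  -- conclude
  have hFa : F x0 ≤ F a := hx0 a
  have hgta : g xs - 2 * δ ≤ gt t a := by
    have := hga a; cases abs_lt.mp this; linarith
  have hnum_lb : e * (g xs - 2 * δ) ≤ F a + e * gt t a - F x0 := by
    have := mul_le_mul_of_nonneg_left hgta hepos.le
    linarith
  have hnum_ub : F a + e * gt t a - F x0 ≤ e * (g xs + δ) := by linarith
  have hdiv_lb : g xs - 2 * δ ≤ (F a + e * gt t a - F x0) / e := by
    rw [le_div_iff₀ hepos]; linarith [mul_comm e (g xs - 2 * δ)]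
  have hdiv_ub : (F a + e * gt t a - F x0) / e ≤ g xs + δ := by
    rw [div_le_iff₀ hepos]; linarith [mul_comm e (g xs + δ)]
  rw [Real.dist_eq, abs_lt]
  constructor <;> simp only [hδdef] at hdiv_lb hdiv_ub <;> linarith
end
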